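/- For independent random variables ξ and ψ, each supported on [0, π/2] with density f(θ) = sin(2θ), the random variable Z = sin²(ξ + ψ) has cumulative distribution function F(z) = z − √(z(1−z))·arcsin(√z) for z ∈ (0,1); in particular cos²(ξ−ψ) and sin²(ξ+ψ) have the same distribution. -/

import Mathlib

open MeasureTheory Real Set

lemma sin_int (t : ℝ) : ∫ x in (0:ℝ)..t, Real.sin (2*x) = Real.sin t ^ 2 := by
  have h : ∀ x ∈ Set.uIcc (0:ℝ) t, HasDerivAt (fun y => Real.sin y ^ 2) (Real.sin (2*x)) x := by
    intro x _
    have h2 : HasDerivAt (fun y => Real.sin y ^ 2) (2 * Real.sin x * Real.cos x) x := by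
      have := (Real.hasDerivAt_sin x).pow 2
      refine this.congr_deriv ?_; norm_num
    rw [Real.sin_two_mul]; exact h2
  have := intervalIntegral.integral_eq_sub_of_hasDerivAt h ?_
  · simpa using this
  · exact (Real.continuous_sin.comp (continuous_const.mul continuous_id)).intervalIntegrable 0 t

lemma trig_int (a : ℝ) : ∫ x in (0:ℝ)..a, Real.sin (a-x)^2 * Real.sin (2*x)
    = Real.sin a^2/2 - a * Real.sin (2*a)/4 := by
  have h : ∀ x ∈ Set.uIcc (0:ℝ) a,
      HasDerivAt (fun y => -Real.cos (2*y)/4 - y * Real.sin (2*a)/4 + Real.cos (2*a-4*y)/16)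
        (Real.sin (a-x)^2 * Real.sin (2*x)) x := by
    intro x _
    have h1 : HasDerivAt (fun y : ℝ => -Real.cos (2*y)/4) (Real.sin (2*x)/2) x := by
      have := ((Real.hasDerivAt_cos (2*x)).comp x ((hasDerivAt_id x).const_mul 2)).neg.div_const 4
      refine this.congr_deriv ?_; ring
    have h2 : HasDerivAt (fun y : ℝ => y * Real.sin (2*a)/4) (Real.sin (2*a)/4) x := by
      have := ((hasDerivAt_id x).mul_const (Real.sin (2*a))).div_const 4
      simpa using this
    have h3 : HasDerivAt (fun y : ℝ => Real.cos (2*a-4*y)/16) (Real.sin (2*a-4*x)/4) x := by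
      have hi : HasDerivAt (fun y : ℝ => 2*a - 4*y) (-4) x := by
        simpa using ((hasDerivAt_id x).const_mul 4).const_sub (2*a)
      have := ((Real.hasDerivAt_cos (2*a-4*x)).comp x hi).div_const 16
      refine this.congr_deriv ?_; ring
    have := (h1.sub h2).add h3
    refine this.congr_deriv (Eq.symm ?_)
    have e1 := Real.sin_sq_add_cos_sq x
    have e2 := Real.sin_sq_add_cos_sq a
    simp only [Real.sin_sub, Real.cos_sub, Real.sin_two_mul, Real.cos_two_mul,
      show (2:ℝ)*a - 4*x = 2*a - 2*(2*x) by ring]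
    linear_combination (-4*Real.sin a*Real.cos a*Real.cos x^2
      + 2*Real.cos a^2*Real.sin x*Real.cos x) * e1 + 2*Real.sin x*Real.cos x^3 * e2
  have := intervalIntegral.integral_eq_sub_of_hasDerivAt h ?_
  · rw [this]
    have e2 := Real.sin_sq_add_cos_sq a
    simp only [show (2:ℝ)*a - 4*a = -(2*a) by ring, Real.cos_neg, mul_zero, sub_zero,
      Real.cos_zero, Real.cos_two_mul, Real.sin_two_mul]
    nlinarith [e2]
  · apply Continuous.intervalIntegrable; continuity

noncomputable def nu : Measure ℝ :=
  (volume.restrict (Icc 0 (π/2))).withDensity (fun θ => ENNReal.ofReal (Real.sin (2*θ)))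

lemma nu_apply (s : Set ℝ) (hs : MeasurableSet s) :
    nu s = ∫⁻ θ in s ∩ Icc 0 (π/2), ENNReal.ofReal (Real.sin (2*θ)) := by
  rw [nu, withDensity_apply _ hs, Measure.restrict_restrict hs]

lemma lint_Icc (t : ℝ) (h0 : 0 ≤ t) (h2 : t ≤ π/2) :
    ∫⁻ θ in Icc 0 t, ENNReal.ofReal (Real.sin (2*θ)) = ENNReal.ofReal (Real.sin t ^ 2) := by
  rw [← ofReal_integral_eq_lintegral_ofReal]
  · rw [integral_Icc_eq_integral_Ioc, ← intervalIntegral.integral_of_le h0, sin_int]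
  · exact (Real.continuous_sin.comp (by continuity)).integrableOn_Icc
  · filter_upwards [ae_restrict_mem measurableSet_Icc] with θ hθ
    exact Real.sin_nonneg_of_nonneg_of_le_pi (by linarith [hθ.1]) (by linarith [hθ.2, pi_pos.le])

lemma nu_Icc (t : ℝ) (h0 : 0 ≤ t) (h2 : t ≤ π/2) :
    nu (Icc 0 t) = ENNReal.ofReal (Real.sin t ^ 2) := by
  rw [nu_apply _ measurableSet_Icc, show Icc 0 t ∩ Icc 0 (π/2) = Icc 0 t by
      apply inter_eq_left.mpr; exact Icc_subset_Icc le_rfl h2, lint_Icc t h0 h2]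

lemma nu_univ : nu univ = 1 := by
  rw [nu_apply _ MeasurableSet.univ, univ_inter, lint_Icc (π/2) (by positivity) le_rfl,
    Real.sin_pi_div_two]
  norm_num

instance : IsProbabilityMeasure nu := ⟨nu_univ⟩

lemma nu_compl : nu (Icc 0 (π/2))ᶜ = 0 := by
  rw [nu_apply _ measurableSet_Icc.compl, compl_inter_self]
  simp

lemma nu_lintegral (g : ℝ → ENNReal) (hg : Measurable g) :
    ∫⁻ x, g x ∂nu = ∫⁻ x in Icc 0 (π/2), ENNReal.ofReal (Real.sin (2*x)) * g x := by
  rw [nu, lintegral_withDensity_eq_lintegral_mul _ (by fun_prop) hg]; rfl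

lemma nu_map_reflect : nu.map (fun x => π/2 - x) = nu := by
  have hm : Measurable (fun x : ℝ => π/2 - x) := measurable_const.sub measurable_id
  ext s hs
  rw [Measure.map_apply hm hs, nu_apply _ (hm hs), nu_apply _ hs]
  have hI : (fun x : ℝ => π/2 - x) ⁻¹' (Icc 0 (π/2)) = Icc 0 (π/2) := by
    ext x; simp only [mem_preimage, mem_Icc]
    constructor <;> (rintro ⟨h1, h2⟩; constructor <;> linarith)
  have hset : (fun x : ℝ => π/2 - x) ⁻¹' s ∩ Icc 0 (π/2)
      = (fun x : ℝ => π/2 - x) ⁻¹' (s ∩ Icc 0 (π/2)) := by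
    rw [preimage_inter, hI]
  rw [hset]
  have hmp : MeasurePreserving (fun x : ℝ => π/2 - x) volume volume :=
    Measure.measurePreserving_sub_left volume (π/2)
  rw [← MeasurePreserving.setLIntegral_comp_preimage hmp (hs.inter measurableSet_Icc)
    (by fun_prop : Measurable fun θ => ENNReal.ofReal (Real.sin (2*θ)))]
  apply setLIntegral_congr_fun (hm (hs.inter measurableSet_Icc))
  exact fun x _ => by
    rw [show 2*(π/2 - x) = π - 2*x by ring, Real.sin_pi_sub]

lemma sin_le_char {α s : ℝ} (hα0 : 0 ≤ α) (hαπ : α ≤ π/2) (hs0 : 0 ≤ s) (hsπ : s ≤ π) :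
    Real.sin s ≤ Real.sin α ↔ (s ≤ α ∨ π - α ≤ s) := by
  rcases le_total s (π/2) with h | h
  · have hmem1 : s ∈ Icc (-(π/2)) (π/2) := ⟨by linarith [pi_pos.le], h⟩
    have hmem2 : α ∈ Icc (-(π/2)) (π/2) := ⟨by linarith [pi_pos.le], hαπ⟩
    rw [Real.strictMonoOn_sin.le_iff_le hmem1 hmem2]
    constructor
    · exact Or.inl
    · rintro (h' | h')
      · exact h'
      · linarith
  · rw [← Real.sin_pi_sub s]
    have hmem1 : π - s ∈ Icc (-(π/2)) (π/2) := ⟨by linarith [pi_pos.le], by linarith⟩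
    have hmem2 : α ∈ Icc (-(π/2)) (π/2) := ⟨by linarith [pi_pos.le], hαπ⟩
    rw [Real.strictMonoOn_sin.le_iff_le hmem1 hmem2]
    constructor
    · intro h'; right; linarith
    · rintro (h' | h')
      · linarith
      · linarith

theorem cdf_sin_sq_sum
    {Ω : Type*} [MeasurableSpace Ω] (μ : Measure Ω) [IsProbabilityMeasure μ]
    (ξ ψ : Ω → ℝ) (hmξ : Measurable ξ) (hmψ : Measurable ψ)
    (hindep : ProbabilityTheory.IndepFun ξ ψ μ)
    (hξ : μ.map ξ = (volume.restrict (Icc 0 (π/2))).withDensity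
      (fun θ => ENNReal.ofReal (Real.sin (2*θ))))
    (hψ : μ.map ψ = (volume.restrict (Icc 0 (π/2))).withDensity
      (fun θ => ENNReal.ofReal (Real.sin (2*θ)))) :
    (∀ z ∈ Ioo (0:ℝ) 1,
      μ {ω | Real.sin (ξ ω + ψ ω) ^ 2 ≤ z}
        = ENNReal.ofReal (z - Real.sqrt (z*(1-z)) * Real.arcsin (Real.sqrt z)))
    ∧ μ.map (fun ω => Real.cos (ξ ω - ψ ω) ^ 2)
        = μ.map (fun ω => Real.sin (ξ ω + ψ ω) ^ 2) := by
  have hξ' : μ.map ξ = nu := hξ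
  have hψ' : μ.map ψ = nu := hψ
  have hT : Measurable (fun x : ℝ => π/2 - x) := measurable_const.sub measurable_id
  have hmψT : Measurable (fun ω => π/2 - ψ ω) := measurable_const.sub hmψ
  -- joint law of (ξ, ψ)
  have hpair : μ.map (fun ω => (ξ ω, ψ ω)) = nu.prod nu := by
    rw [(ProbabilityTheory.indepFun_iff_map_prod_eq_prod_map_map hmξ.aemeasurable
      hmψ.aemeasurable).mp hindep, hξ', hψ']
  -- joint law of (ξ, π/2 - ψ)
  have hψT : μ.map (fun ω => π/2 - ψ ω) = nu := by
    have : (fun ω => π/2 - ψ ω) = (fun x : ℝ => π/2 - x) ∘ ψ := rfl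
    rw [this, ← Measure.map_map hT hmψ, hψ', nu_map_reflect]
  have hindep' : ProbabilityTheory.IndepFun ξ (fun ω => π/2 - ψ ω) μ :=
    hindep.comp measurable_id hT
  have hpair' : μ.map (fun ω => (ξ ω, π/2 - ψ ω)) = nu.prod nu := by
    rw [(ProbabilityTheory.indepFun_iff_map_prod_eq_prod_map_map hmξ.aemeasurable
      hmψT.aemeasurable).mp hindep', hξ', hψT]
  have hgm : Measurable (fun p : ℝ × ℝ => Real.sin (p.1 + p.2) ^ 2) := by fun_prop
  constructor
  · -- the CDF computation
    intro z hz
    obtain ⟨hz0, hz1⟩ := hz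
    set α := Real.arcsin (Real.sqrt z) with hα
    have hsz0 : 0 < Real.sqrt z := Real.sqrt_pos.mpr hz0
    have hsz1 : Real.sqrt z < 1 := by
      rw [show (1:ℝ) = Real.sqrt 1 by simp]
      exact Real.sqrt_lt_sqrt hz0.le hz1
    have hα0 : 0 < α := Real.arcsin_pos.mpr hsz0
    have hαlt : α < π/2 := Real.arcsin_lt_pi_div_two.mpr hsz1
    have hsinα : Real.sin α = Real.sqrt z := Real.sin_arcsin (by linarith) hsz1.le
    have hcosα : Real.cos α = Real.sqrt (1 - z) := by
      rw [hα, Real.cos_arcsin, Real.sq_sqrt hz0.le]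
    have hz_eq : Real.sin α ^ 2 = z := by rw [hsinα, Real.sq_sqrt hz0.le]
    set I : Set ℝ := Icc 0 (π/2) with hI
    set S : Set (ℝ × ℝ) := {p : ℝ × ℝ | Real.sin (p.1 + p.2) ^ 2 ≤ z} with hS
    have hSm : MeasurableSet S := measurableSet_le hgm measurable_const
    set A : Set (ℝ × ℝ) := (I ×ˢ I) ∩ {p : ℝ × ℝ | p.1 + p.2 ≤ α} with hA
    set B : Set (ℝ × ℝ) := (I ×ˢ I) ∩ {p : ℝ × ℝ | π - α ≤ p.1 + p.2} with hB
    have hAm : MeasurableSet A := (measurableSet_Icc.prod measurableSet_Icc).inter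
      (measurableSet_le (measurable_fst.add measurable_snd) measurable_const)
    have hBm : MeasurableSet B := (measurableSet_Icc.prod measurableSet_Icc).inter
      (measurableSet_le measurable_const (measurable_fst.add measurable_snd))
    -- step 1: reduce to the product measure
    have h1 : μ {ω | Real.sin (ξ ω + ψ ω) ^ 2 ≤ z} = (nu.prod nu) S := by
      have : {ω | Real.sin (ξ ω + ψ ω) ^ 2 ≤ z} = (fun ω => (ξ ω, ψ ω)) ⁻¹' S := rfl
      rw [this, ← Measure.map_apply (hmξ.prodMk hmψ) hSm, hpair]
    -- step 2: restrict to the square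
    have h2 : (nu.prod nu) S = (nu.prod nu) (S ∩ I ×ˢ I) := by
      apply le_antisymm
      · calc (nu.prod nu) S ≤ (nu.prod nu) ((S ∩ I ×ˢ I) ∪ (I ×ˢ I)ᶜ) :=
              measure_mono (fun p hp => by
                by_cases h : p ∈ I ×ˢ I
                · exact Or.inl ⟨hp, h⟩
                · exact Or.inr h)
          _ ≤ (nu.prod nu) (S ∩ I ×ˢ I) + (nu.prod nu) ((I ×ˢ I)ᶜ) := measure_union_le _ _
          _ = (nu.prod nu) (S ∩ I ×ˢ I) := by
              rw [compl_prod_eq_union]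
              have h1 : (nu.prod nu) (Iᶜ ×ˢ (univ : Set ℝ)) = 0 := by
                rw [Measure.prod_prod, nu_compl]; simp
              have h2 : (nu.prod nu) ((univ : Set ℝ) ×ˢ Iᶜ) = 0 := by
                rw [Measure.prod_prod, nu_compl]; simp
              rw [measure_union_null h1 h2]; simp
      · exact measure_mono inter_subset_left
    -- step 3: S ∩ square = A ∪ B
    have h3 : S ∩ I ×ˢ I = A ∪ B := by
      ext ⟨x, y⟩
      simp only [hS, hA, hB, mem_inter_iff, mem_setOf_eq, mem_union, mem_prod, hI, mem_Icc]
      constructor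
      · rintro ⟨hle, hx, hy⟩
        have hs0 : 0 ≤ x + y := by linarith [hx.1, hy.1]
        have hsπ : x + y ≤ π := by linarith [hx.2, hy.2]
        have : Real.sin (x + y) ≤ Real.sin α := by
          have hnn : 0 ≤ Real.sin (x + y) := Real.sin_nonneg_of_nonneg_of_le_pi hs0 hsπ
          rw [hsinα]
          have h' := Real.sqrt_le_sqrt hle
          rwa [Real.sqrt_sq hnn] at h'
        rcases (sin_le_char hα0.le hαlt.le hs0 hsπ).mp this with h' | h'
        · exact Or.inl ⟨⟨hx, hy⟩, h'⟩
        · exact Or.inr ⟨⟨hx, hy⟩, h'⟩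
      · rintro (⟨⟨hx, hy⟩, h'⟩ | ⟨⟨hx, hy⟩, h'⟩) <;>
        · refine ⟨?_, hx, hy⟩
          have hs0 : 0 ≤ x + y := by linarith [hx.1, hy.1]
          have hsπ : x + y ≤ π := by linarith [hx.2, hy.2]
          have hle : Real.sin (x + y) ≤ Real.sin α :=
            (sin_le_char hα0.le hαlt.le hs0 hsπ).mpr (by tauto)
          have hnn : 0 ≤ Real.sin (x + y) := Real.sin_nonneg_of_nonneg_of_le_pi hs0 hsπ
          rw [← hz_eq]
          exact pow_le_pow_left₀ hnn hle 2
    -- step 4: B has the same measure as A via reflection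
    have h4 : (nu.prod nu) B = (nu.prod nu) A := by
      have hTT : (nu.prod nu).map (Prod.map (fun x : ℝ => π/2 - x) (fun x : ℝ => π/2 - x))
          = nu.prod nu := by
        rw [← Measure.map_prod_map _ _ hT hT, nu_map_reflect]
      have hpre : (Prod.map (fun x : ℝ => π/2 - x) (fun x : ℝ => π/2 - x)) ⁻¹' B = A := by
        ext ⟨x, y⟩
        simp only [hA, hB, mem_preimage, Prod.map_apply, mem_inter_iff, mem_prod, hI, mem_Icc,
          mem_setOf_eq]
        constructor
        · rintro ⟨⟨⟨h1, h2⟩, h3, h4⟩, h5⟩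
          exact ⟨⟨⟨by linarith, by linarith⟩, by linarith, by linarith⟩, by linarith⟩
        · rintro ⟨⟨⟨h1, h2⟩, h3, h4⟩, h5⟩
          exact ⟨⟨⟨by linarith, by linarith⟩, by linarith, by linarith⟩, by linarith⟩
      rw [← hpre, ← Measure.map_apply (hT.prodMap hT) hBm, hTT]
    -- step 5: disjointness
    have h5 : Disjoint A B := by
      rw [Set.disjoint_left]
      rintro ⟨x, y⟩ ⟨_, h1⟩ ⟨_, h2⟩
      simp only [mem_setOf_eq] at h1 h2
      have : π - α ≤ α := le_trans h2 h1
      linarith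
    -- step 6: compute the measure of A
    have h6 : (nu.prod nu) A = ENNReal.ofReal (Real.sin α ^ 2 / 2 - α * Real.sin (2*α) / 4) := by
      rw [Measure.prod_apply hAm]
      have hslice : ∀ x : ℝ, (Prod.mk x ⁻¹' A) =
          if x ∈ I ∧ x ≤ α then Icc 0 (α - x) else ∅ := by
        intro x
        ext y
        simp only [hA, mem_preimage, mem_inter_iff, mem_prod, hI, mem_Icc, mem_setOf_eq]
        split_ifs with hxc
        · simp only [mem_Icc]
          constructor
          · rintro ⟨⟨_, hy⟩, hs⟩; exact ⟨hy.1, by linarith⟩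
          · rintro ⟨hy0, hyα⟩
            refine ⟨⟨hxc.1, hy0, ?_⟩, by linarith⟩
            linarith [hxc.2, hαlt.le]
        · simp only [mem_empty_iff_false, iff_false]
          rintro ⟨⟨hx, hy⟩, hs⟩
          exact hxc ⟨hx, by linarith [hy.1]⟩
      -- rewrite the integral over nu
      have hmeas_slice : Measurable (fun x => nu (Prod.mk x ⁻¹' A)) :=
        measurable_measure_prodMk_left hAm
      rw [nu_lintegral _ hmeas_slice]
      have hsplit : Icc (0:ℝ) (π/2) = Icc 0 α ∪ Ioc α (π/2) :=
        (Icc_union_Ioc_eq_Icc hα0.le hαlt.le).symm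
      rw [hsplit, lintegral_union measurableSet_Ioc ((Iic_disjoint_Ioc le_rfl).mono_left Icc_subset_Iic_self)]
      have hz2 : ∫⁻ x in Ioc α (π/2), ENNReal.ofReal (Real.sin (2*x)) * nu (Prod.mk x ⁻¹' A)
          ∂volume = 0 := by
        rw [setLIntegral_congr_fun measurableSet_Ioc (fun x hx => ?_),
          lintegral_zero]
        rw [hslice x, if_neg (fun hc => by linarith [hx.1, hc.2])]
        simp
      rw [hz2, add_zero]
      have hcong : ∫⁻ x in Icc 0 α, ENNReal.ofReal (Real.sin (2*x)) * nu (Prod.mk x ⁻¹' A)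
          ∂volume = ∫⁻ x in Icc 0 α,
            ENNReal.ofReal (Real.sin (α - x)^2 * Real.sin (2*x)) ∂volume := by
        apply setLIntegral_congr_fun measurableSet_Icc (fun x hx => ?_)
        rw [hslice x, if_pos ⟨⟨hx.1, le_trans hx.2 hαlt.le⟩, hx.2⟩,
          nu_Icc (α - x) (by linarith [hx.2]) (by linarith [hx.1, hαlt.le]),
          ← ENNReal.ofReal_mul (Real.sin_nonneg_of_nonneg_of_le_pi (by linarith [hx.1])
            (by linarith [hx.2, hαlt.le, pi_pos.le])), mul_comm]
      rw [hcong, ← ofReal_integral_eq_lintegral_ofReal]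
      · rw [integral_Icc_eq_integral_Ioc, ← intervalIntegral.integral_of_le hα0.le, trig_int]
      · have hc : Continuous fun x => Real.sin (α - x)^2 * Real.sin (2*x) := by fun_prop
        exact hc.integrableOn_Icc
      · filter_upwards [ae_restrict_mem measurableSet_Icc] with x hx
        have h1 : 0 ≤ Real.sin (2*x) := Real.sin_nonneg_of_nonneg_of_le_pi
          (by linarith [hx.1]) (by linarith [hx.2, hαlt.le, pi_pos.le])
        positivity
    -- assemble
    have hGnn : 0 ≤ Real.sin α ^ 2 / 2 - α * Real.sin (2*α) / 4 := by
      have htan := Real.lt_tan hα0 hαlt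
      have hcos : 0 < Real.cos α := Real.cos_pos_of_mem_Ioo ⟨by linarith [pi_pos], hαlt⟩
      rw [Real.tan_eq_sin_div_cos, lt_div_iff₀ hcos] at htan
      have hsin : 0 < Real.sin α := Real.sin_pos_of_pos_of_lt_pi hα0 (by linarith [pi_pos])
      rw [Real.sin_two_mul]
      nlinarith
    rw [h1, h2, h3, measure_union h5 hBm, h4, h6, ← ENNReal.ofReal_add hGnn hGnn]
    congr 1
    rw [Real.sin_two_mul, hsinα, hcosα, Real.sq_sqrt hz0.le, Real.sqrt_mul hz0.le]
    ring
  · -- equality of distributions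
    have hcosf : (fun ω => Real.cos (ξ ω - ψ ω) ^ 2)
        = (fun p : ℝ × ℝ => Real.sin (p.1 + p.2) ^ 2) ∘ (fun ω => (ξ ω, π/2 - ψ ω)) := by
      funext ω
      simp only [Function.comp_apply]
      rw [show ξ ω + (π/2 - ψ ω) = (ξ ω - ψ ω) + π/2 by ring, Real.sin_add_pi_div_two]
    have hsinf : (fun ω => Real.sin (ξ ω + ψ ω) ^ 2)
        = (fun p : ℝ × ℝ => Real.sin (p.1 + p.2) ^ 2) ∘ (fun ω => (ξ ω, ψ ω)) := rfl
    rw [hcosf, hsinf, ← Measure.map_map hgm (hmξ.prodMk hmψT),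
      ← Measure.map_map hgm (hmξ.prodMk hmψ), hpair, hpair']
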